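/- arXiv:1608.03115 — 3 statements merged into one kernel-verified Lean document; each statement's English description precedes it below -/
import Mathlib

section
/- If x̂ ∈ S is a weak efficient solution of (P) and the weak Abadie data qualification (WADQ) holds at x̂, then 0 ∈ F_*(x̂) + cl(G_*(x̂)). -/
open Set Filter Topology
open scoped RealInnerProductSpace Pointwise

noncomputable section

namespace MOSIP

variable {n : ℕ} {T : Type*} {p : ℕ}

/-- The decision space `ℝ^n`. -/
abbrev Eucl (n : ℕ) := EuclideanSpace ℝ (Fin n)

/-- Subdifferential of a real-valued function. -/
def subdiff (h : Eucl n → ℝ) (x : Eucl n) : Set (Eucl n) :=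
  {ξ | ∀ y, h x + ⟪ξ, y - x⟫ ≤ h y}

/-- Subdifferential of an extended-real-valued function. -/
def subdiffE (h : Eucl n → EReal) (x : Eucl n) : Set (Eucl n) :=
  {ξ | ∀ y, h x + ((⟪ξ, y - x⟫ : ℝ) : EReal) ≤ h y}

/-- Convexity of an extended-real-valued function. -/
def ConvexE (h : Eucl n → EReal) : Prop :=
  ∀ x y : Eucl n, ∀ a b : ℝ, 0 ≤ a → 0 ≤ b → a + b = 1 →
    h (a • x + b • y) ≤ (a : EReal) * h x + (b : EReal) * h y

/-- Proper (with values in `ℝ ∪ {+∞}`): never `−∞` and not identically `+∞`. -/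
def ProperE (h : Eucl n → EReal) : Prop :=
  (∀ x, h x ≠ ⊥) ∧ (∃ x, h x ≠ ⊤)

/-- Feasible set `S` of the problem `(P)`. -/
def feasSet (g : T → Eucl n → EReal) : Set (Eucl n) := {x | ∀ t, g t x ≤ 0}

/-- Active indices `T(x)`. -/
def activeIx (g : T → Eucl n → EReal) (x : Eucl n) : Set T := {t | g t x = 0}

/-- `ε`-active indices `T_ε(x)`. -/
def activeIxEps (g : T → Eucl n → EReal) (x : Eucl n) (ε : ℝ) : Set T :=
  {t | ((-ε : ℝ) : EReal) ≤ g t x}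

/-- `F(xh) = ⋃ i, ∂f_i(xh)`. -/
def FSet (f : Fin p → Eucl n → ℝ) (x : Eucl n) : Set (Eucl n) := ⋃ i, subdiff (f i) x

/-- `G(xh) = ⋃_{t ∈ T(xh)} ∂g_t(xh)`. -/
def GSet (g : T → Eucl n → EReal) (x : Eucl n) : Set (Eucl n) :=
  ⋃ t ∈ activeIx g x, subdiffE (g t) x

/-- The smallest convex cone containing `M` and `0`: all finite nonnegative combinations. -/
def coneHull (M : Set (Eucl n)) : Set (Eucl n) :=
  {x | ∃ (s : Finset (Eucl n)) (c : Eucl n → ℝ), ↑s ⊆ M ∧ (∀ v ∈ s, 0 ≤ c v) ∧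
    x = ∑ v ∈ s, c v • v}

/-- Negative polar cone `M⁰`. -/
def negPolar (M : Set (Eucl n)) : Set (Eucl n) := {d | ∀ ξ ∈ M, ⟪ξ, d⟫ ≤ 0}

/-- Strictly negative polar cone `M⁻`. -/
def strictNegPolar (M : Set (Eucl n)) : Set (Eucl n) := {d | ∀ ξ ∈ M, ⟪ξ, d⟫ < 0}

/-- Contingent (Bouligand tangent) cone of `M` at `x`. -/
def contingentCone (M : Set (Eucl n)) (x : Eucl n) : Set (Eucl n) :=
  {v | ∃ (τ : ℕ → ℝ) (w : ℕ → Eucl n), (∀ r, 0 < τ r) ∧ Tendsto τ atTop (𝓝 0) ∧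
    Tendsto w atTop (𝓝 v) ∧ ∀ r, x + τ r • w r ∈ M}

/-- Normal cone `N(M, x) := C(M, x)⁰`. -/
def normalCone (M : Set (Eucl n)) (x : Eucl n) : Set (Eucl n) :=
  negPolar (contingentCone M x)

/-- Weak efficient solution. -/
def WeakEff (f : Fin p → Eucl n → ℝ) (S : Set (Eucl n)) (xh : Eucl n) : Prop :=
  ¬ ∃ x ∈ S, ∀ i, f i x < f i xh

/-- Efficient solution. -/
def Eff (f : Fin p → Eucl n → ℝ) (S : Set (Eucl n)) (xh : Eucl n) : Prop :=
  ¬ ∃ x ∈ S, (∀ i, f i x ≤ f i xh) ∧ ∃ j, f j x < f j xh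

/-- Isolated efficient solution with constant `ν`:
`max_i (f_i(x) − f_i(xh)) ≥ ν‖x − xh‖` on `S`. -/
def IsolatedEff (f : Fin p → Eucl n → ℝ) (S : Set (Eucl n)) (xh : Eucl n) (ν : ℝ) : Prop :=
  ∀ x ∈ S, ∃ i, ν * ‖x - xh‖ ≤ f i x - f i xh

/-- `w ∈ Σ α_i ∂f_i(xh) + Σ_{t ∈ T*} β_t ∂g_t(xh)` with multipliers as described,
where `Nonneg`/`Pos` refers to the sign condition on the `α_i`. -/
def KKTPoint (f : Fin p → Eucl n → ℝ) (g : T → Eucl n → EReal) (xh : Eucl n)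
    (w : Eucl n) : Prop :=
  ∃ (α : Fin p → ℝ) (Ts : Finset T) (β : T → ℝ) (ξ : Fin p → Eucl n) (ζ : T → Eucl n),
    (∀ i, 0 ≤ α i) ∧ ∑ i, α i = 1 ∧ (∀ t ∈ Ts, t ∈ activeIx g xh) ∧
    (∀ t ∈ Ts, 0 ≤ β t) ∧ (∀ i, ξ i ∈ subdiff (f i) xh) ∧
    (∀ t ∈ Ts, ζ t ∈ subdiffE (g t) xh) ∧
    ∑ i, α i • ξ i + ∑ t ∈ Ts, β t • ζ t = w

/-- The weak KKT condition at `xh`. -/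
def WeakKKT (f : Fin p → Eucl n → ℝ) (g : T → Eucl n → EReal) (xh : Eucl n) : Prop :=
  KKTPoint f g xh 0

/-- The strong KKT condition at `xh` (all objective multipliers positive). -/
def StrongKKT (f : Fin p → Eucl n → ℝ) (g : T → Eucl n → EReal) (xh : Eucl n) : Prop :=
  ∃ (α : Fin p → ℝ) (Ts : Finset T) (β : T → ℝ) (ξ : Fin p → Eucl n) (ζ : T → Eucl n),
    (∀ i, 0 < α i) ∧ ∑ i, α i = 1 ∧ (∀ t ∈ Ts, t ∈ activeIx g xh) ∧
    (∀ t ∈ Ts, 0 ≤ β t) ∧ (∀ i, ξ i ∈ subdiff (f i) xh) ∧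
    (∀ t ∈ Ts, ζ t ∈ subdiffE (g t) xh) ∧
    ∑ i, α i • ξ i + ∑ t ∈ Ts, β t • ζ t = 0

/-- The perturbed KKT condition at `xh` with constant `ν`. -/
def PerturbedKKT (f : Fin p → Eucl n → ℝ) (g : T → Eucl n → EReal) (xh : Eucl n)
    (ν : ℝ) : Prop :=
  ∀ w : Eucl n, ‖w‖ ≤ ν → KKTPoint f g xh w

/-- The gap function `ϑ(x, ξ, λ) = sup_{y ∈ S} Σ_i λ_i ⟪ξ_i, x − y⟫`. -/
def gapFn (S : Set (Eucl n)) (x : Eucl n) (ξ : Fin p → Eucl n) (lam : Fin p → ℝ) : EReal :=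
  ⨆ y ∈ S, ((∑ i, lam i * ⟪ξ i, x - y⟫ : ℝ) : EReal)

/-- The unit simplex of multipliers. -/
def simplex (lam : Fin p → ℝ) : Prop := (∀ i, 0 ≤ lam i) ∧ ∑ i, lam i = 1

/-- Supremum (marginal) function `ψ(x) = sup_t g_t(x)`. -/
def supFn (g : T → Eucl n → EReal) (x : Eucl n) : EReal := ⨆ t, g t x

/-- Directional derivative of a convex extended-real-valued function,
`h'(x; d) = inf_{τ > 0} (h(x + τ d) − h(x))/τ` (the limit as `τ ↓ 0`). -/
def dirDeriv (h : Eucl n → EReal) (x d : Eucl n) : EReal :=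
  ⨅ τ ∈ Ioi (0 : ℝ), (h (x + τ • d) - h x) * ((τ⁻¹ : ℝ) : EReal)

/-- Every constraint is (real-valued and) continuously differentiable around `xh`,
with gradient `gr t` at `xh`. -/
def SmoothConstraintsAt (g : T → Eucl n → EReal) (gr : T → Eucl n) (xh : Eucl n) : Prop :=
  ∀ t, ∃ (h : Eucl n → ℝ) (U : Set (Eucl n)), U ∈ 𝓝 xh ∧ (∀ y ∈ U, g t y = (h y : EReal)) ∧
    ContDiffOn ℝ 1 h U ∧ gradient h xh = gr t

/-- Slater CQ. -/
def SCQ (g : T → Eucl n → EReal) : Prop := ∃ x₀ : Eucl n, ∀ t, g t x₀ < 0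

/-- Mangasarian–Fromovitz CQ at `xh`. -/
def MFCQ (g : T → Eucl n → EReal) (xh : Eucl n) : Prop :=
  (GSet g xh).Nonempty ∧ (strictNegPolar (GSet g xh)).Nonempty

/-- Perturbed Mangasarian–Fromovitz CQ at `xh`. -/
def PMFCQ (g : T → Eucl n → EReal) (xh : Eucl n) : Prop :=
  ∃ xs : Eucl n,
    (⨅ ε ∈ Ioi (0 : ℝ), ⨆ ξ ∈ ⋃ t ∈ activeIxEps g xh ε, subdiffE (g t) xh,
      ((⟪ξ, xs⟫ : ℝ) : EReal)) < 0

/-- Local Farkas–Minkowski CQ at `xh`. -/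
def LFMCQ (g : T → Eucl n → EReal) (xh : Eucl n) : Prop :=
  normalCone (feasSet g) xh = coneHull (GSet g xh)

/-- Closed cone CQ at `xh`. -/
def CCCQ (g : T → Eucl n → EReal) (xh : Eucl n) : Prop :=
  IsClosed (coneHull (GSet g xh))

/-- Abadie CQ at `xh`. -/
def ACQ (g : T → Eucl n → EReal) (xh : Eucl n) : Prop :=
  (GSet g xh).Nonempty ∧ negPolar (GSet g xh) ⊆ contingentCone (feasSet g) xh

/-- Kuhn–Tucker CQ at `xh`. -/
def KTCQ (g : T → Eucl n → EReal) (xh : Eucl n) : Prop :=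
  {d | dirDeriv (supFn g) xh d ≤ 0} ⊆ contingentCone (feasSet g) xh

/-- Pshenichnyi–Levin–Valadier CQ at `xh`. -/
def PLVCQ (g : T → Eucl n → EReal) (xh : Eucl n) : Prop :=
  subdiffE (supFn g) xh ⊆ coneHull (GSet g xh)

/-- Weak Abadie DQ at `xh`. -/
def WADQ (f : Fin p → Eucl n → ℝ) (g : T → Eucl n → EReal) (xh : Eucl n) : Prop :=
  (GSet g xh).Nonempty ∧
    strictNegPolar (FSet f xh) ∩ negPolar (GSet g xh) ⊆ contingentCone (feasSet g) xh

/-- The sublevel sets `Q^i(xh)`. -/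
def QSet (f : Fin p → Eucl n → ℝ) (S : Set (Eucl n)) (xh : Eucl n) (i : Fin p) :
    Set (Eucl n) :=
  {x ∈ S | ∀ l, l ≠ i → f l x ≤ f l xh}

/-- Extended Abadie DQ at `xh`. -/
def EADQ (f : Fin p → Eucl n → ℝ) (g : T → Eucl n → EReal) (xh : Eucl n) : Prop :=
  (GSet g xh).Nonempty ∧
    negPolar (FSet f xh) ∩ negPolar (GSet g xh) ⊆
      ⋂ i, contingentCone (QSet f (feasSet g) xh i) xh

/-- Maeda objective qualification at `xh`. -/
def MOQ (f : Fin p → Eucl n → ℝ) (xh : Eucl n) : Prop :=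
  negPolar (FSet f xh) ⊆ {0} ∪ ⋃ i, strictNegPolar (subdiff (f i) xh)

variable {n p : ℕ} {T : Type*}
section Aux

variable {n : ℕ}

/-- Difference quotient of `f` at `x` in direction `v`. -/
def slope' (f : Eucl n → ℝ) (x v : Eucl n) (τ : ℝ) : ℝ := (f (x + τ • v) - f x) / τ

lemma slope'_mono {f : Eucl n → ℝ} (hf : ConvexOn ℝ Set.univ f) (x v : Eucl n) {s t : ℝ}
    (hs : 0 < s) (hst : s ≤ t) : slope' f x v s ≤ slope' f x v t := by
  have ht : 0 < t := hs.trans_le hst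
  have hb : (0:ℝ) ≤ s / t := by positivity
  have ha : (0:ℝ) ≤ 1 - s / t := by
    rw [sub_nonneg]; exact div_le_one_of_le₀ hst ht.le
  have hab : (1 - s / t) + s / t = 1 := by ring
  have key := hf.2 (Set.mem_univ x) (Set.mem_univ (x + t • v)) ha hb hab
  have hpt : (1 - s / t) • x + (s / t) • (x + t • v) = x + s • v := by
    rw [smul_add, smul_smul, div_mul_cancel₀ _ ht.ne']
    module
  rw [hpt, smul_eq_mul, smul_eq_mul] at key
  rw [slope', slope', div_le_div_iff₀ hs ht]
  have key2 := mul_le_mul_of_nonneg_right key ht.le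
  have hexp : ((1 - s / t) * f x + s / t * f (x + t • v)) * t
      = f x * t - s * f x + s * f (x + t • v) := by
    field_simp
  rw [hexp] at key2
  linarith

lemma slope'_lb {f : Eucl n → ℝ} (hf : ConvexOn ℝ Set.univ f) (x v : Eucl n) {τ : ℝ}
    (hτ : 0 < τ) : f x - f (x - v) ≤ slope' f x v τ := by
  have h1τ : (0:ℝ) < 1 + τ := by linarith
  have ha : (0:ℝ) ≤ τ / (1 + τ) := by positivity
  have hb : (0:ℝ) ≤ 1 / (1 + τ) := by positivity
  have hab : τ / (1 + τ) + 1 / (1 + τ) = 1 := by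
    rw [← add_div, add_comm τ 1, div_self h1τ.ne']
  have key := hf.2 (Set.mem_univ (x - v)) (Set.mem_univ (x + τ • v)) ha hb hab
  have hpt : (τ / (1 + τ)) • (x - v) + (1 / (1 + τ)) • (x + τ • v) = x := by
    rw [smul_sub, smul_add, smul_smul, show 1 / (1 + τ) * τ = τ / (1 + τ) by ring]
    have h3 : (τ / (1 + τ)) • x - (τ / (1 + τ)) • v + ((1 / (1 + τ)) • x + (τ / (1 + τ)) • v)
        = (τ / (1 + τ) + 1 / (1 + τ)) • x := by
      rw [add_smul]; abel
    rw [h3, hab, one_smul]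
  rw [hpt, smul_eq_mul, smul_eq_mul] at key
  rw [slope', le_div_iff₀ hτ]
  have key2 := mul_le_mul_of_nonneg_right key h1τ.le
  have hexp : (τ / (1 + τ) * f (x - v) + 1 / (1 + τ) * f (x + τ • v)) * (1 + τ)
      = τ * f (x - v) + f (x + τ • v) := by
    field_simp
  rw [hexp] at key2
  linarith

/-- Directional derivative (as an infimum of difference quotients). -/
def qf (f : Eucl n → ℝ) (x v : Eucl n) : ℝ := sInf (slope' f x v '' Set.Ioi 0)

lemma qf_img_nonempty (f : Eucl n → ℝ) (x v : Eucl n) :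
    (slope' f x v '' Set.Ioi 0).Nonempty :=
  ⟨slope' f x v 1, 1, by norm_num, rfl⟩

lemma qf_img_bddBelow {f : Eucl n → ℝ} (hf : ConvexOn ℝ Set.univ f) (x v : Eucl n) :
    BddBelow (slope' f x v '' Set.Ioi 0) := by
  refine ⟨f x - f (x - v), ?_⟩
  rintro _ ⟨τ, hτ, rfl⟩
  exact slope'_lb hf x v hτ

lemma qf_le_slope' {f : Eucl n → ℝ} (hf : ConvexOn ℝ Set.univ f) (x v : Eucl n) {τ : ℝ}
    (hτ : 0 < τ) : qf f x v ≤ slope' f x v τ :=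
  csInf_le (qf_img_bddBelow hf x v) ⟨τ, hτ, rfl⟩

lemma qf_lb {f : Eucl n → ℝ} (hf : ConvexOn ℝ Set.univ f) (x v : Eucl n) :
    f x - f (x - v) ≤ qf f x v :=
  le_csInf (qf_img_nonempty f x v) (by rintro _ ⟨τ, hτ, rfl⟩; exact slope'_lb hf x v hτ)

lemma qf_zero {f : Eucl n → ℝ} (hf : ConvexOn ℝ Set.univ f) (x : Eucl n) : qf f x 0 = 0 := by
  have h1 := qf_le_slope' hf x 0 one_pos
  have h2 := qf_lb hf x 0
  simp [slope'] at h1 h2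
  linarith

lemma qf_smul {f : Eucl n → ℝ} (hf : ConvexOn ℝ Set.univ f) (x : Eucl n) {c : ℝ} (hc : 0 < c)
    (v : Eucl n) : qf f x (c • v) = c * qf f x v := by
  have hkey : ∀ τ : ℝ, 0 < τ → slope' f x (c • v) τ = c * slope' f x v (τ * c) := by
    intro τ hτ
    rw [slope', slope', smul_smul]
    field_simp
  have hset : slope' f x (c • v) '' Set.Ioi 0 = c • (slope' f x v '' Set.Ioi 0) := by
    ext z
    constructor
    · rintro ⟨τ, hτ, rfl⟩
      exact ⟨slope' f x v (τ * c), ⟨τ * c, mul_pos hτ hc, rfl⟩, (hkey τ hτ).symm⟩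
    · rintro ⟨z', ⟨τ, hτ, rfl⟩, rfl⟩
      refine ⟨τ / c, div_pos hτ hc, ?_⟩
      rw [hkey (τ / c) (div_pos hτ hc), div_mul_cancel₀ _ hc.ne']
      rfl
  rw [qf, hset, Real.sInf_smul_of_nonneg hc.le]
  rfl

lemma qf_add {f : Eucl n → ℝ} (hf : ConvexOn ℝ Set.univ f) (x u v : Eucl n) :
    qf f x (u + v) ≤ qf f x u + qf f x v := by
  refine le_of_forall_pos_le_add fun ε hε => ?_
  have h1 : qf f x u < qf f x u + ε / 2 := by linarith
  have h2 : qf f x v < qf f x v + ε / 2 := by linarith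
  obtain ⟨_, ⟨τ₁, hτ₁, rfl⟩, ha1⟩ := exists_lt_of_csInf_lt (qf_img_nonempty f x u) h1
  obtain ⟨_, ⟨τ₂, hτ₂, rfl⟩, ha2⟩ := exists_lt_of_csInf_lt (qf_img_nonempty f x v) h2
  set τ := min τ₁ τ₂ with hτdef
  have hτ : (0:ℝ) < τ := lt_min hτ₁ hτ₂
  have hm1 : slope' f x u τ ≤ slope' f x u τ₁ := slope'_mono hf x u hτ (min_le_left _ _)
  have hm2 : slope' f x v τ ≤ slope' f x v τ₂ := slope'_mono hf x v hτ (min_le_right _ _)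
  have hsub : slope' f x (u + v) (τ / 2) ≤ slope' f x u τ + slope' f x v τ := by
    have key := hf.2 (Set.mem_univ (x + τ • u)) (Set.mem_univ (x + τ • v))
      (by norm_num : (0:ℝ) ≤ 1/2) (by norm_num : (0:ℝ) ≤ 1/2) (by norm_num)
    have hpt : (1/2 : ℝ) • (x + τ • u) + (1/2 : ℝ) • (x + τ • v) = x + (τ / 2) • (u + v) := by
      module
    rw [hpt, smul_eq_mul, smul_eq_mul] at key
    rw [slope', slope', slope', ← add_div, div_le_div_iff₀ (by positivity) hτ]
    nlinarith [mul_le_mul_of_nonneg_right key hτ.le]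
  have hq : qf f x (u + v) ≤ slope' f x (u + v) (τ / 2) :=
    qf_le_slope' hf x (u + v) (by positivity)
  linarith

lemma qf_le_sub {f : Eucl n → ℝ} (hf : ConvexOn ℝ Set.univ f) (x v : Eucl n) :
    qf f x v ≤ f (x + v) - f x := by
  have := qf_le_slope' hf x v one_pos
  simpa [slope'] using this

/-- Hahn–Banach: there is a subgradient achieving the directional derivative. -/
lemma exists_subgrad {f : Eucl n → ℝ} (hf : ConvexOn ℝ Set.univ f) (x d : Eucl n) :
    ∃ ξ : Eucl n, ξ ∈ subdiff f x ∧ ⟪ξ, d⟫ = qf f x d := by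
  classical
  set N : Eucl n → ℝ := qf f x with hN
  have N_hom : ∀ c : ℝ, 0 < c → ∀ v, N (c • v) = c * N v := fun c hc v => qf_smul hf x hc v
  have N_add : ∀ u v, N (u + v) ≤ N u + N v := fun u v => qf_add hf x u v
  have N0 : N 0 = 0 := qf_zero hf x
  have Nsym : ∀ v, 0 ≤ N v + N (-v) := by
    intro v
    have := N_add v (-v)
    rw [add_neg_cancel, N0] at this
    linarith
  set L : Eucl n →ₗ[ℝ] ℝ :=
    { toFun := fun v => (N d / ‖d‖ ^ 2) * ⟪d, v⟫
      map_add' := fun a b => by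
        show N d / ‖d‖ ^ 2 * ⟪d, a + b⟫ = N d / ‖d‖ ^ 2 * ⟪d, a⟫ + N d / ‖d‖ ^ 2 * ⟪d, b⟫
        rw [inner_add_right]; ring
      map_smul' := fun c a => by
        show N d / ‖d‖ ^ 2 * ⟪d, c • a⟫ = c * (N d / ‖d‖ ^ 2 * ⟪d, a⟫)
        rw [real_inner_smul_right]; ring } with hL
  have hLval : ∀ c : ℝ, L (c • d) = if d = 0 then 0 else c * N d := by
    intro c
    by_cases hd : d = 0
    · simp [hL, hd]
    · have hdd : ⟪d, (c • d : Eucl n)⟫ = c * ‖d‖ ^ 2 := by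
        rw [inner_smul_right, real_inner_self_eq_norm_sq]
      have hdn : ‖d‖ ^ 2 ≠ 0 := pow_ne_zero 2 (norm_ne_zero_iff.mpr hd)
      simp only [hL, LinearMap.coe_mk, AddHom.coe_mk, hdd, hd, if_false]
      rw [show N d / ‖d‖ ^ 2 * (c * ‖d‖ ^ 2) = c * (N d * (‖d‖ ^ 2 / ‖d‖ ^ 2)) by ring,
        div_self hdn, mul_one]
  have hdom : ∀ z : (L.toPMap (Submodule.span ℝ {d})).domain, (L.toPMap _) z ≤ N z := by
    intro z
    change L z ≤ N z
    obtain ⟨c, hc⟩ := Submodule.mem_span_singleton.mp z.2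
    have hz1 : (z : Eucl n) = c • d := hc.symm
    rw [hz1, hLval]
    by_cases hd : d = 0
    · rw [if_pos hd, hd, smul_zero]
      exact N0.ge
    · rw [if_neg hd]
      rcases lt_trichotomy c 0 with hc | hc | hc
      · have h1 : (c • d : Eucl n) = (-c) • (-d) := by module
        have h2 : N (c • d) = (-c) * N (-d) := by rw [h1, N_hom (-c) (by linarith)]
        have := Nsym d
        nlinarith
      · rw [hc, zero_mul, zero_smul]
        exact N0.ge
      · rw [N_hom c hc]
  obtain ⟨G, hG1, hG2⟩ := exists_extension_of_le_sublinear (L.toPMap (Submodule.span ℝ {d}))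
    N N_hom N_add hdom
  set ξ : Eucl n := (InnerProductSpace.toDual ℝ (Eucl n)).symm (LinearMap.toContinuousLinearMap G)
    with hξ
  have hξv : ∀ v, ⟪ξ, v⟫ = G v := by
    intro v
    rw [hξ, InnerProductSpace.toDual_symm_apply]
    simp
  have hmem : ξ ∈ subdiff f x := by
    intro y
    have h1 : ⟪ξ, y - x⟫ ≤ N (y - x) := by rw [hξv]; exact hG2 _
    have h2 : N (y - x) ≤ f y - f x := by
      have := qf_le_sub hf x (y - x)
      rwa [add_sub_cancel] at this
    linarith
  refine ⟨ξ, hmem, ?_⟩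
  have hd_mem : d ∈ Submodule.span ℝ ({d} : Set (Eucl n)) := Submodule.mem_span_singleton_self d
  have hGd := hG1 ⟨d, hd_mem⟩
  change G d = L d at hGd
  have hLd : L d = N d := by
    have h1 := hLval 1
    rw [one_smul] at h1
    by_cases hd : d = 0
    · rw [h1, if_pos hd, hd]
      exact N0.symm
    · rw [h1, if_neg hd, one_mul]
  rw [hξv, hGd, hLd]

lemma subdiff_isClosed (f : Eucl n → ℝ) (x : Eucl n) : IsClosed (subdiff f x) := by
  have : subdiff f x = ⋂ y, {ξ : Eucl n | f x + ⟪ξ, y - x⟫ ≤ f y} := by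
    ext ξ; simp [subdiff, Set.mem_iInter]
  rw [this]
  exact isClosed_iInter fun y =>
    isClosed_le (continuous_const.add (continuous_id.inner continuous_const)) continuous_const

lemma subdiff_bounded {f : Eucl n → ℝ} (hf : ConvexOn ℝ Set.univ f) (x : Eucl n) :
    ∃ C : ℝ, ∀ ξ ∈ subdiff f x, ‖ξ‖ ≤ C := by
  obtain ⟨K, t, ht, hlip⟩ := hf.locallyLipschitz x
  obtain ⟨δ, hδ, hball⟩ := Metric.mem_nhds_iff.mp ht
  refine ⟨K, fun ξ hξ => ?_⟩
  by_cases h0 : ξ = 0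
  · simp [h0]
  · have hnn : (0:ℝ) < ‖ξ‖ := norm_pos_iff.mpr h0
    set u : Eucl n := (δ / 2 / ‖ξ‖) • ξ with hu
    have hun : ‖u‖ = δ / 2 := by
      rw [hu, norm_smul, Real.norm_eq_abs, abs_of_pos (by positivity)]
      field_simp
    have hxu : x + u ∈ Metric.ball x δ := by
      rw [Metric.mem_ball, dist_eq_norm, add_sub_cancel_left, hun]
      linarith
    have hxx : x ∈ Metric.ball x δ := Metric.mem_ball_self hδ
    have h1 : f x + ⟪ξ, (x + u) - x⟫ ≤ f (x + u) := hξ (x + u)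
    have h2 : f (x + u) - f x ≤ K * ‖(x + u) - x‖ := by
      have hthis := hlip.dist_le_mul (x + u) (hball hxu) x (hball hxx)
      rw [dist_eq_norm, dist_eq_norm] at hthis
      calc f (x + u) - f x ≤ |f (x + u) - f x| := le_abs_self _
        _ = ‖f (x + u) - f x‖ := (Real.norm_eq_abs _).symm
        _ ≤ K * ‖(x + u) - x‖ := hthis
    have h3 : ⟪ξ, u⟫ = (δ / 2) * ‖ξ‖ := by
      rw [hu, real_inner_smul_right, real_inner_self_eq_norm_sq]
      field_simp
    rw [add_sub_cancel_left] at h1 h2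
    rw [h3] at h1
    rw [hun] at h2
    have hδ2 : (0:ℝ) < δ / 2 := by linarith
    nlinarith

lemma coneHull_zero_mem (M : Set (Eucl n)) : (0 : Eucl n) ∈ coneHull M :=
  ⟨∅, 0, by simp, by simp, by simp⟩

lemma sum_ite_subset' [DecidableEq (Eucl n)] (s t : Finset (Eucl n)) (hst : s ⊆ t)
    (c : Eucl n → ℝ) :
    ∑ v ∈ t, (if v ∈ s then c v else 0) • v = ∑ v ∈ s, c v • v := by
  classical
  rw [← Finset.sum_subset hst (fun x _ hxs => by simp [hxs])]
  exact Finset.sum_congr rfl fun v hv => by simp [hv]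

lemma coneHull_add_mem {M : Set (Eucl n)} {x y : Eucl n} (hx : x ∈ coneHull M)
    (hy : y ∈ coneHull M) : x + y ∈ coneHull M := by
  classical
  obtain ⟨s, c, hs, hc, rfl⟩ := hx
  obtain ⟨s', c', hs', hc', rfl⟩ := hy
  refine ⟨s ∪ s', fun v => (if v ∈ s then c v else 0) + (if v ∈ s' then c' v else 0), ?_, ?_, ?_⟩
  · rw [Finset.coe_union]
    exact Set.union_subset hs hs'
  · intro v _
    dsimp only
    have h1 : (0:ℝ) ≤ if v ∈ s then c v else 0 := by
      split_ifs with h; exacts [hc v h, le_rfl]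
    have h2 : (0:ℝ) ≤ if v ∈ s' then c' v else 0 := by
      split_ifs with h; exacts [hc' v h, le_rfl]
    linarith
  · simp only [add_smul, Finset.sum_add_distrib]
    rw [sum_ite_subset' s (s ∪ s') Finset.subset_union_left c,
      sum_ite_subset' s' (s ∪ s') Finset.subset_union_right c']

lemma coneHull_smul_mem {M : Set (Eucl n)} {c : ℝ} (hc : 0 ≤ c) {x : Eucl n}
    (hx : x ∈ coneHull M) : c • x ∈ coneHull M := by
  obtain ⟨s, w, hs, hw, rfl⟩ := hx
  refine ⟨s, fun v => c * w v, hs, fun v hv => mul_nonneg hc (hw v hv), ?_⟩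
  rw [Finset.smul_sum]
  exact Finset.sum_congr rfl fun v _ => by rw [smul_smul]

lemma coneHull_mem_of_mem {M : Set (Eucl n)} {x : Eucl n} (hx : x ∈ M) : x ∈ coneHull M := by
  classical
  refine ⟨{x}, fun _ => 1, by simpa using hx, by simp, by simp⟩

lemma convex_coneHull (M : Set (Eucl n)) : Convex ℝ (coneHull M) :=
  fun _ hx _ hy _ _ ha hb _ => coneHull_add_mem (coneHull_smul_mem ha hx) (coneHull_smul_mem hb hy)

end Aux
section Aux2

variable {n : ℕ}

lemma isCompact_convexHull_iUnion {p : ℕ} (hp : 0 < p) (K : Fin p → Set (Eucl n))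
    (hconv : ∀ i, Convex ℝ (K i)) (hcomp : ∀ i, IsCompact (K i)) (hne : ∀ i, (K i).Nonempty) :
    IsCompact (convexHull ℝ (⋃ i, K i)) := by
  classical
  have hnonempty : Nonempty (Fin p) := Fin.pos_iff_nonempty.mp hp
  set Φ : ((Fin p → ℝ) × (Fin p → Eucl n)) → Eucl n := fun q => ∑ i, q.1 i • q.2 i with hΦdef
  set D := (stdSimplex ℝ (Fin p)) ×ˢ Set.univ.pi (fun i => K i) with hD
  have hDcomp : IsCompact D := (isCompact_stdSimplex _ _).prod (isCompact_univ_pi hcomp)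
  have hΦ : Continuous Φ := continuous_finset_sum _ fun i _ =>
    ((continuous_apply i).comp continuous_fst).smul ((continuous_apply i).comp continuous_snd)
  have himg : convexHull ℝ (⋃ i, K i) = Φ '' D := by
    apply Subset.antisymm
    · apply convexHull_min
      · -- ⋃ K ⊆ Φ '' D
        rintro x hx
        obtain ⟨i, hi⟩ := Set.mem_iUnion.mp hx
        set y : Fin p → Eucl n := fun j => (hne j).some with hy
        refine ⟨⟨fun j => if i = j then 1 else 0, Function.update y i x⟩,
          ⟨ite_eq_mem_stdSimplex ℝ i, ?_⟩, ?_⟩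
        · intro j _
          show Function.update y i x j ∈ K j
          by_cases hj : j = i
          · subst hj; simpa using hi
          · rw [Function.update_of_ne hj]; exact (hne j).some_mem
        · show ∑ j, (if i = j then (1:ℝ) else 0) • Function.update y i x j = x
          rw [Finset.sum_eq_single i (fun b _ hb => by
              rw [if_neg (fun h => hb h.symm), zero_smul])
            (fun h => absurd (Finset.mem_univ i) h)]
          rw [if_pos rfl, one_smul, Function.update_self]
      · -- Φ '' D convex
        rintro _ ⟨⟨lam, xs⟩, ⟨hl, hx⟩, rfl⟩ _ ⟨⟨mu, ys⟩, ⟨hm, hy⟩, rfl⟩ a b ha hb hab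
        set ν : Fin p → ℝ := fun i => a * lam i + b * mu i with hν
        have hνnn : ∀ i, 0 ≤ ν i := fun i =>
          add_nonneg (mul_nonneg ha (hl.1 i)) (mul_nonneg hb (hm.1 i))
        set z : Fin p → Eucl n := fun i =>
          if h : ν i = 0 then xs i
          else ((a * lam i) / ν i) • xs i + ((b * mu i) / ν i) • ys i with hz
        have hxsK : ∀ i, xs i ∈ K i := fun i => hx i (Set.mem_univ i)
        have hysK : ∀ i, ys i ∈ K i := fun i => hy i (Set.mem_univ i)
        refine ⟨⟨ν, z⟩, ⟨⟨hνnn, ?_⟩, ?_⟩, ?_⟩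
        · simp only [hν]
          rw [Finset.sum_add_distrib, ← Finset.mul_sum, ← Finset.mul_sum, hl.2, hm.2]
          simpa using hab
        · intro i _
          simp only [hz]
          split_ifs with h
          · exact hxsK i
          · refine hconv i (hxsK i) (hysK i)
              (div_nonneg (mul_nonneg ha (hl.1 i)) (hνnn i))
              (div_nonneg (mul_nonneg hb (hm.1 i)) (hνnn i)) ?_
            rw [← add_div, div_self h]
        · show Φ (ν, z) = a • Φ (lam, xs) + b • Φ (mu, ys)
          simp only [hΦdef, Finset.smul_sum, ← Finset.sum_add_distrib]
          refine Finset.sum_congr rfl fun i _ => ?_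
          show ν i • z i = a • (lam i • xs i) + b • (mu i • ys i)
          simp only [hz]
          split_ifs with h
          · have h' : a * lam i + b * mu i = 0 := h
            have ha1 : (0:ℝ) ≤ a * lam i := mul_nonneg ha (hl.1 i)
            have hb1 : (0:ℝ) ≤ b * mu i := mul_nonneg hb (hm.1 i)
            have h2 : a * lam i = 0 := by linarith
            have h3 : b * mu i = 0 := by linarith
            rw [smul_smul, smul_smul, h2, h3, h]
            simp
          · rw [smul_add, smul_smul, smul_smul, smul_smul, smul_smul,
              mul_comm (ν i) (a * lam i / ν i), mul_comm (ν i) (b * mu i / ν i),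
              div_mul_cancel₀ _ h, div_mul_cancel₀ _ h]
    · -- Φ '' D ⊆ convexHull
      rintro _ ⟨⟨lam, xs⟩, ⟨hl, hx⟩, rfl⟩
      have := Finset.centerMass_mem_convexHull (Finset.univ) (fun i _ => hl.1 i)
        (by rw [hl.2]; norm_num) (fun i _ => Set.mem_iUnion.mpr ⟨i, hx i (Set.mem_univ i)⟩)
      rwa [Finset.centerMass_eq_of_sum_1 _ _ hl.2] at this
  rw [himg]
  exact hDcomp.image hΦ

end Aux2
lemma qf_exists_slope_lt {n : ℕ} {f : Eucl n → ℝ} {x v : Eucl n} {c : ℝ}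
    (h : qf f x v < c) : ∃ τ : ℝ, 0 < τ ∧ slope' f x v τ < c := by
  obtain ⟨_, ⟨τ, hτ, rfl⟩, hlt⟩ := exists_lt_of_csInf_lt (qf_img_nonempty f x v) h
  exact ⟨τ, hτ, hlt⟩

lemma subdiff_convex {n : ℕ} (f : Eucl n → ℝ) (x : Eucl n) : Convex ℝ (subdiff f x) := by
  intro ξ hξ η hη a b ha hb hab y
  have h1 := hξ y
  have h2 := hη y
  have hin : ⟪a • ξ + b • η, y - x⟫ = a * ⟪ξ, y - x⟫ + b * ⟪η, y - x⟫ := by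
    rw [inner_add_left, real_inner_smul_left, real_inner_smul_left]
  rw [hin]
  have e1 := mul_le_mul_of_nonneg_left h1 ha
  have e2 := mul_le_mul_of_nonneg_left h2 hb
  have e3 : a * f y + b * f y = f y := by rw [← add_mul, hab, one_mul]
  have e4 : a * f x + b * f x = f x := by rw [← add_mul, hab, one_mul]
  nlinarith [e1, e2, e3, e4]

/-- If `x̂ ∈ S` is a weak efficient solution of `(P)` and WADQ holds at `x̂`,
then `0 ∈ F_*(x̂) + cl(G_*(x̂))`. -/
theorem stmt1
    (hn : 1 ≤ n) (hp : 1 ≤ p)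
    (f : Fin p → Eucl n → ℝ) (g : T → Eucl n → EReal)
    (hf : ∀ i, ConvexOn ℝ Set.univ (f i))
    (hgconv : ∀ t, ConvexE (g t))
    (hgproper : ∀ t, ProperE (g t))
    (hglsc : ∀ t, LowerSemicontinuous (g t))
    (xh : Eucl n) (hxS : xh ∈ feasSet g)
    (hweak : WeakEff f (feasSet g) xh)
    (hwadq : WADQ f g xh) :
    (0 : Eucl n) ∈ convexHull ℝ (FSet f xh) + closure (coneHull (GSet g xh)) := by
  classical
  by_contra h0
  haveI hpfin : Nonempty (Fin p) := Fin.pos_iff_nonempty.mp hp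
  set K : Fin p → Set (Eucl n) := fun i => subdiff (f i) xh with hKdef
  choose Kc tc htc hlip using fun i => (hf i).locallyLipschitz xh
  choose δc hδc hballc using fun i => Metric.mem_nhds_iff.mp (htc i)
  have hKne : ∀ i, (K i).Nonempty := fun i => ⟨_, (exists_subgrad (hf i) xh 0).choose_spec.1⟩
  have hKconv : ∀ i, Convex ℝ (K i) := fun i => subdiff_convex (f i) xh
  have hKcomp : ∀ i, IsCompact (K i) := by
    intro i
    obtain ⟨C, hC⟩ := subdiff_bounded (hf i) xh
    refine Metric.isCompact_of_isClosed_isBounded (subdiff_isClosed (f i) xh) ?_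
    refine (Metric.isBounded_closedBall (x := (0 : Eucl n)) (r := C)).subset ?_
    intro ξ hξ
    rw [Metric.mem_closedBall, dist_zero_right]
    exact hC ξ hξ
  have hCF : IsCompact (convexHull ℝ (FSet f xh)) :=
    isCompact_convexHull_iUnion hp K hKconv hKcomp hKne
  set CG := closure (coneHull (GSet g xh)) with hCGdef
  have hCGconv : Convex ℝ CG := (convex_coneHull _).closure
  have hCGzero : (0 : Eucl n) ∈ CG := subset_closure (coneHull_zero_mem _)
  set A := convexHull ℝ (FSet f xh) + CG with hAdef
  have hAconv : Convex ℝ A := (convex_convexHull ℝ _).add hCGconv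
  have hAclosed : IsClosed A := isClosed_closure.add_left_of_isCompact hCF
  obtain ⟨φ, u, hu0, hAu⟩ := geometric_hahn_banach_point_closed hAconv hAclosed h0
  rw [map_zero] at hu0
  set d : Eucl n := -((InnerProductSpace.toDual ℝ (Eucl n)).symm φ) with hddef
  have hdval : ∀ ξ : Eucl n, ⟪ξ, d⟫ = -φ ξ := by
    intro ξ
    rw [real_inner_comm, hddef, inner_neg_left, InnerProductSpace.toDual_symm_apply]
  have hd1 : d ∈ strictNegPolar (FSet f xh) := by
    intro ξ hξ
    have h1 : ξ + 0 ∈ A := Set.add_mem_add (subset_convexHull ℝ _ hξ) hCGzero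
    rw [add_zero] at h1
    have h2 := hAu ξ h1
    rw [hdval]
    linarith
  have i0 : Fin p := ⟨0, hp⟩
  obtain ⟨ξ0, hξ0⟩ := hKne i0
  have hξ0F : ξ0 ∈ convexHull ℝ (FSet f xh) :=
    subset_convexHull ℝ _ (Set.mem_iUnion.mpr ⟨i0, hξ0⟩)
  have hξ0A : ξ0 + 0 ∈ A := Set.add_mem_add hξ0F hCGzero
  rw [add_zero] at hξ0A
  have hφξ0 : u < φ ξ0 := hAu ξ0 hξ0A
  have hd2 : d ∈ negPolar (GSet g xh) := by
    intro ζ hζ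
    rw [hdval]
    by_contra hneg
    push_neg at hneg
    have hφζ : φ ζ < 0 := by linarith
    have hz : φ ζ ≠ 0 := ne_of_lt hφζ
    set lam : ℝ := (φ ξ0 - u) / (-(φ ζ)) + 1 with hlam
    have hlamnn : 0 ≤ lam := by
      rw [hlam]
      have : (0:ℝ) ≤ (φ ξ0 - u) / (-(φ ζ)) := div_nonneg (by linarith) (by linarith)
      linarith
    have hmemA : ξ0 + lam • ζ ∈ A :=
      Set.add_mem_add hξ0F (subset_closure (coneHull_smul_mem hlamnn (coneHull_mem_of_mem hζ)))
    have hlt := hAu _ hmemA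
    rw [map_add, map_smul, smul_eq_mul] at hlt
    have h5 : (φ ξ0 - u) / (-(φ ζ)) * φ ζ = -(φ ξ0 - u) := by
      field_simp
    have hmul : lam * φ ζ = -(φ ξ0 - u) + φ ζ := by
      rw [hlam, add_mul, one_mul, h5]
    linarith
  clear_value d
  clear hddef
  obtain ⟨τ, w, hτpos, hτ0, hwd, hmemS⟩ := hwadq.2 ⟨hd1, hd2⟩
  have hqneg : ∀ i, qf (f i) xh d < 0 := by
    intro i
    obtain ⟨ξ, hξmem, hξval⟩ := exists_subgrad (hf i) xh d
    have := hd1 ξ (Set.mem_iUnion.mpr ⟨i, hξmem⟩)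
    rwa [hξval] at this
  have hτi : ∀ i, ∃ τs : ℝ, 0 < τs ∧ slope' (f i) xh d τs < 0 := fun i =>
    qf_exists_slope_lt (hqneg i)
  choose τs hτspos hτsneg using hτi
  set τstar : ℝ := Finset.univ.inf' Finset.univ_nonempty τs with hτstar
  have hτstarpos : 0 < τstar := by
    rw [hτstar, Finset.lt_inf'_iff]
    exact fun i _ => hτspos i
  have hslopestar : ∀ i, slope' (f i) xh d τstar < 0 := fun i =>
    lt_of_le_of_lt
      (slope'_mono (hf i) xh d hτstarpos
        (by rw [hτstar]; exact Finset.inf'_le _ (Finset.mem_univ i))) (hτsneg i)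
  set κ : ℝ := Finset.univ.sup' Finset.univ_nonempty (fun i => slope' (f i) xh d τstar) with hκ
  have hκneg : κ < 0 := by
    rw [hκ, Finset.sup'_lt_iff]
    exact fun i _ => hslopestar i
  have hκge : ∀ i, slope' (f i) xh d τstar ≤ κ := by
    intro i
    rw [hκ]
    exact Finset.le_sup' (fun j => slope' (f j) xh d τstar) (Finset.mem_univ i)
  clear_value τstar κ
  set Lb : ℝ := Finset.univ.sup' Finset.univ_nonempty (fun i => (Kc i : ℝ)) with hLb
  have hLbge : ∀ i, (Kc i : ℝ) ≤ Lb := by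
    intro i
    rw [hLb]
    exact Finset.le_sup' (fun j => (Kc j : ℝ)) (Finset.mem_univ i)
  set L : ℝ := Lb + 1 with hLdef
  have hLpos : 0 < L := by
    have h2 : (0:ℝ) ≤ (Kc i0 : ℝ) := (Kc i0).coe_nonneg
    have h1 := hLbge i0
    rw [hLdef]
    linarith
  have hLge : ∀ i, (Kc i : ℝ) ≤ L := by
    intro i
    have := hLbge i
    rw [hLdef]
    linarith
  clear_value Lb L
  set δ : ℝ := Finset.univ.inf' Finset.univ_nonempty δc with hδdef
  have hδpos : 0 < δ := by
    rw [hδdef, Finset.lt_inf'_iff]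
    exact fun i _ => hδc i
  have hδle : ∀ i, δ ≤ δc i := by
    intro i
    rw [hδdef]
    exact Finset.inf'_le _ (Finset.mem_univ i)
  clear_value δ
  set ε0 : ℝ := min 1 (-κ / (2 * L)) with hε0
  have hε0pos : 0 < ε0 := lt_min one_pos (div_pos (by linarith) (by linarith))
  have hε0le1 : ε0 ≤ 1 := min_le_left _ _
  have hε0le2 : ε0 ≤ -κ / (2 * L) := min_le_right _ _
  clear_value ε0
  set B : ℝ := min τstar (δ / (‖d‖ + 1)) with hB
  have hBpos : 0 < B := lt_min hτstarpos (div_pos hδpos (by positivity))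
  have hev1 : ∀ᶠ r in atTop, τ r < B := hτ0.eventually (eventually_lt_nhds hBpos)
  have hev2 : ∀ᶠ r in atTop, dist (w r) d < ε0 := (Metric.tendsto_nhds.mp hwd) ε0 hε0pos
  obtain ⟨r, hr1, hr2⟩ := (hev1.and hev2).exists
  set t : ℝ := τ r with htdef
  have htpos : 0 < t := hτpos r
  have hr2' : ‖w r - d‖ < ε0 := by rwa [← dist_eq_norm]
  have hwd1 : ‖w r - d‖ < 1 := lt_of_lt_of_le hr2' hε0le1
  have hwd2 : ‖w r - d‖ ≤ -κ / (2 * L) := le_trans hr2'.le hε0le2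
  have hnormw : ‖w r‖ ≤ ‖d‖ + 1 := by
    have h1 : ‖w r‖ = ‖d + (w r - d)‖ := by rw [add_sub_cancel]
    have h2 : ‖d + (w r - d)‖ ≤ ‖d‖ + ‖w r - d‖ := norm_add_le _ _
    linarith
  have hBd : B * (‖d‖ + 1) ≤ δ := by
    have h1 : B ≤ δ / (‖d‖ + 1) := min_le_right _ _
    rw [← le_div_iff₀ (by positivity : (0:ℝ) < ‖d‖ + 1)]
    exact h1
  have htτstar : t ≤ τstar := le_of_lt (lt_of_lt_of_le hr1 (by rw [hB]; exact min_le_left _ _))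
  clear_value B
  refine hweak ⟨xh + t • w r, hmemS r, fun i => ?_⟩
  clear_value t
  have hin1 : xh + t • w r ∈ Metric.ball xh (δc i) := by
    rw [Metric.mem_ball, dist_eq_norm, add_sub_cancel_left, norm_smul, Real.norm_eq_abs,
      abs_of_pos htpos]
    have h1 : t * ‖w r‖ ≤ t * (‖d‖ + 1) := mul_le_mul_of_nonneg_left hnormw htpos.le
    have h2 : t * (‖d‖ + 1) < B * (‖d‖ + 1) :=
      mul_lt_mul_of_pos_right hr1 (by positivity)
    have h3 := hδle i
    linarith
  have hin2 : xh + t • d ∈ Metric.ball xh (δc i) := by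
    rw [Metric.mem_ball, dist_eq_norm, add_sub_cancel_left, norm_smul, Real.norm_eq_abs,
      abs_of_pos htpos]
    have h1 : t * ‖d‖ ≤ t * (‖d‖ + 1) := by nlinarith
    have h2 : t * (‖d‖ + 1) < B * (‖d‖ + 1) :=
      mul_lt_mul_of_pos_right hr1 (by positivity)
    have h3 := hδle i
    linarith
  have hlipi := (hlip i).mono (hballc i)
  have hdist : dist (xh + t • w r) (xh + t • d) = t * ‖w r - d‖ := by
    rw [dist_eq_norm, add_sub_add_left_eq_sub, ← smul_sub, norm_smul, Real.norm_eq_abs,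
      abs_of_pos htpos]
  have hld := hlipi.dist_le_mul _ hin1 _ hin2
  rw [hdist] at hld
  have est1 : f i (xh + t • w r) - f i (xh + t • d) ≤ L * (t * ‖w r - d‖) := by
    have h1 : f i (xh + t • w r) - f i (xh + t • d)
        ≤ dist (f i (xh + t • w r)) (f i (xh + t • d)) := by
      rw [Real.dist_eq]
      exact le_abs_self _
    have h2 : (Kc i : ℝ) * (t * ‖w r - d‖) ≤ L * (t * ‖w r - d‖) :=
      mul_le_mul_of_nonneg_right (hLge i) (by positivity)
    linarith
  have hslope : slope' (f i) xh d t ≤ κ :=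
    le_trans (slope'_mono (hf i) xh d htpos htτstar) (hκge i)
  have est2 : f i (xh + t • d) ≤ f i xh + t * κ := by
    rw [slope', div_le_iff₀ htpos] at hslope
    linarith
  have hId : L * (t * (-κ / (2 * L))) = t * (-κ / 2) := by
    field_simp
  have est3 : L * (t * ‖w r - d‖) ≤ t * (-κ / 2) := by
    rw [← hId]
    exact mul_le_mul_of_nonneg_left (mul_le_mul_of_nonneg_left hwd2 htpos.le) hLpos.le
  have hκt : t * κ < 0 := mul_neg_of_pos_of_neg htpos hκneg
  have hs1 : f i (xh + t • w r) ≤ f i (xh + t • d) + L * (t * ‖w r - d‖) := by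
    linarith [est1]
  have hs2 : f i (xh + t • d) + L * (t * ‖w r - d‖) ≤ (f i xh + t * κ) + t * (-κ / 2) :=
    add_le_add est2 est3
  have hs3 : t * κ + t * (-κ / 2) < 0 := by linarith [hκt]
  calc f i (xh + t • w r) ≤ (f i xh + t * κ) + t * (-κ / 2) := le_trans hs1 hs2
    _ < f i xh := by linarith [hs3]

end MOSIP
end
end

section
/- If x̂ ∈ S and ϑ(x̂, ξ, λ) = 0 for some ξ = (ξ_1, …, ξ_p) with ξ_i ∈ ∂f_i(x̂) for each i and some λ in the unit simplex, then x̂ is a weak efficient solution of (P). -/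
open Set Filter Topology
open scoped RealInnerProductSpace Pointwise

noncomputable section

namespace MOSIP

variable {n : ℕ} {T : Type*} {p : ℕ}

variable {n p : ℕ} {T : Type*}

/-- If `x̂ ∈ S` and `ϑ(x̂, ξ, λ) = 0` for some `ξ` with `ξ_i ∈ ∂f_i(x̂)` and
some `λ` in the unit simplex, then `x̂` is a weak efficient solution of `(P)`. -/
theorem stmt5
    (hn : 1 ≤ n) (hp : 1 ≤ p)
    (f : Fin p → Eucl n → ℝ) (g : T → Eucl n → EReal)
    (hf : ∀ i, ConvexOn ℝ Set.univ (f i))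
    (hgconv : ∀ t, ConvexE (g t))
    (hgproper : ∀ t, ProperE (g t))
    (hglsc : ∀ t, LowerSemicontinuous (g t))
    (xh : Eucl n) (hxS : xh ∈ feasSet g)
    (ξ : Fin p → Eucl n) (hξ : ∀ i, ξ i ∈ subdiff (f i) xh)
    (lam : Fin p → ℝ) (hlam : simplex lam)
    (hgap : gapFn (feasSet g) xh ξ lam = 0) :
    WeakEff f (feasSet g) xh := by
  rintro ⟨x, hxF, hlt⟩
  -- Each term of the sup is ≤ 0
  have hle : ((∑ i, lam i * ⟪ξ i, xh - x⟫ : ℝ) : EReal) ≤ 0 := by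
    rw [← hgap]
    exact le_iSup₂ (f := fun y (_ : y ∈ feasSet g) =>
      ((∑ i, lam i * ⟪ξ i, xh - y⟫ : ℝ) : EReal)) x hxF
  have hleR : (∑ i, lam i * ⟪ξ i, xh - x⟫ : ℝ) ≤ 0 := by
    exact_mod_cast hle
  -- each inner product is positive
  have hpos : ∀ i, 0 < ⟪ξ i, xh - x⟫ := by
    intro i
    have h := hξ i x
    have : ⟪ξ i, x - xh⟫ < 0 := by nlinarith [hlt i]
    have hh : xh - x = -(x - xh) := by abel
    rw [hh, inner_neg_right]
    linarith
  obtain ⟨hlam0, hlam1⟩ := hlam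
  have hj : ∃ j, 0 < lam j := by
    by_contra h
    push_neg at h
    have : ∑ i, lam i = 0 := Finset.sum_eq_zero fun i _ =>
      le_antisymm (h i) (hlam0 i)
    rw [hlam1] at this
    norm_num at this
  obtain ⟨j, hj⟩ := hj
  have hsum : 0 < ∑ i, lam i * ⟪ξ i, xh - x⟫ := by
    apply Finset.sum_pos' (fun i _ => mul_nonneg (hlam0 i) (hpos i).le)
    exact ⟨j, Finset.mem_univ j, mul_pos hj (hpos j)⟩
  linarith

end MOSIP
end
end

section
/- If x̂ ∈ S is a weak efficient solution of (P) and the local Farkas–Minkowski constraint qualification (LFMCQ) holds at x̂, then there exist ξ = (ξ_1, …, ξ_p) with ξ_i ∈ ∂f_i(x̂) for each i and λ in the unit simplex such that ϑ(x̂, ξ, λ) = 0. -/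
open Set Filter Topology
open scoped RealInnerProductSpace Pointwise

noncomputable section

namespace MOSIP

variable {n : ℕ} {T : Type*} {p : ℕ}

section Aux

private lemma ereal_mul_nonpos {a : ℝ} (ha : 0 ≤ a) {e : EReal} (he : e ≤ 0) :
    (a : EReal) * e ≤ 0 := by
  obtain rfl | ha' := ha.eq_or_lt
  · simp
  · induction e using EReal.rec with
    | bot =>
      rw [EReal.coe_mul_bot_of_pos ha']
      exact bot_le
    | coe b =>
      rw [← EReal.coe_mul]
      exact EReal.coe_nonpos.2
        (mul_nonpos_iff.2 (Or.inl ⟨ha'.le, EReal.coe_nonpos.1 he⟩))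
    | top => simp at he

private lemma combo_lt {a b u v t t' : ℝ} (ha : 0 ≤ a) (hb : 0 ≤ b) (hab : a + b = 1)
    (hu : u < t) (hv : v < t') : a * u + b * v < a * t + b * t' := by
  obtain rfl | ha' := ha.eq_or_lt
  · simp only [zero_add] at hab; subst hab; simpa
  · obtain rfl | hb' := hb.eq_or_lt
    · simp only [add_zero] at hab; subst hab; simpa
    · have := mul_lt_mul_of_pos_left hu ha'
      have := mul_lt_mul_of_pos_left hv hb'
      linarith

lemma scalarize {n p : ℕ} (f : Fin p → Eucl n → ℝ) (hf : ∀ i, ConvexOn ℝ Set.univ (f i))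
    (S : Set (Eucl n)) (hS : Convex ℝ S) (xh : Eucl n) (hxS : xh ∈ S)
    (hweak : ¬ ∃ x ∈ S, ∀ i, f i x < f i xh) :
    ∃ lam : Fin p → ℝ, (∀ i, 0 ≤ lam i) ∧ ∑ i, lam i = 1 ∧
      ∀ x ∈ S, ∑ i, lam i * f i xh ≤ ∑ i, lam i * f i x := by
  set A : Set (EuclideanSpace ℝ (Fin p)) :=
    {r | ∃ x ∈ S, ∀ i, f i x - f i xh ≤ r i} with hA
  set B : Set (EuclideanSpace ℝ (Fin p)) := {r | ∀ i, r i < 0} with hB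
  have hBopen : IsOpen B := by
    have hBeq : B = ⋂ i, (EuclideanSpace.proj (𝕜 := ℝ) i) ⁻¹' Iio (0:ℝ) := by
      ext r; simp [hB]
    rw [hBeq]
    exact isOpen_iInter_of_finite fun i => isOpen_Iio.preimage (EuclideanSpace.proj i).continuous
  have hBconv : Convex ℝ B := by
    intro r hr r' hr' a b ha hb hab i
    have hco : (a • r + b • r') i = a * r i + b * r' i := rfl
    rw [hco]
    have := combo_lt ha hb hab (hr i) (hr' i)
    simpa using this
  have hAconv : Convex ℝ A := by
    rintro r ⟨x, hx, hr⟩ r' ⟨x', hx', hr'⟩ a b ha hb hab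
    refine ⟨a • x + b • x', hS hx hx' ha hb hab, fun i => ?_⟩
    have hco : (a • r + b • r') i = a * r i + b * r' i := rfl
    rw [hco]
    have h1 := (hf i).2 (Set.mem_univ x) (Set.mem_univ x') ha hb hab
    simp only [smul_eq_mul] at h1
    have h3 : a * f i xh + b * f i xh = f i xh := by rw [← add_mul, hab, one_mul]
    nlinarith [mul_le_mul_of_nonneg_left (hr i) ha, mul_le_mul_of_nonneg_left (hr' i) hb]
  have hdisj : Disjoint B A := by
    rw [Set.disjoint_left]
    rintro r hrB ⟨x, hx, hr⟩
    exact hweak ⟨x, hx, fun i => by have := hr i; have := hrB i; linarith⟩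
  obtain ⟨φ, u, hBu, hAu⟩ := geometric_hahn_banach_open hBconv hBopen hAconv hdisj
  set μ : EuclideanSpace ℝ (Fin p) := (InnerProductSpace.toDual ℝ _).symm φ with hμ
  have hμr : ∀ r : EuclideanSpace ℝ (Fin p), φ r = ∑ i, μ i * r i := by
    intro r
    have h := InnerProductSpace.toDual_symm_apply (𝕜 := ℝ)
      (E := EuclideanSpace ℝ (Fin p)) (y := φ) (x := r)
    rw [← hμ] at h
    rw [← h]
    simp [PiLp.inner_apply, RCLike.inner_apply, conj_trivial]
    exact Finset.sum_congr rfl fun i _ => mul_comm _ _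
  have h0A : (0 : EuclideanSpace ℝ (Fin p)) ∈ A := ⟨xh, hxS, fun i => by simp⟩
  have hu0 : u ≤ 0 := by simpa using hAu _ h0A
  set σ : ℝ := ∑ i, μ i with hσ
  have hBε : ∀ ε : ℝ, 0 < ε → -(ε * σ) < u := by
    intro ε hε
    have hmem : (WithLp.toLp 2 (fun _ => -ε) : EuclideanSpace ℝ (Fin p)) ∈ B := fun i => by simpa using hε
    have := hBu _ hmem
    rw [hμr] at this
    simp only [mul_neg, mul_comm] at this
    rw [hσ, Finset.mul_sum]
    simpa [neg_mul, Finset.sum_neg_distrib, mul_comm] using this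
  have hσpos : 0 < σ := by
    have := hBε 1 one_pos
    rw [one_mul] at this
    linarith
  have hu' : 0 ≤ u := by
    by_contra hcon
    push_neg at hcon
    have := hBε (-u / (2 * σ)) (div_pos (by linarith) (by linarith))
    rw [show -u / (2 * σ) * σ = -u / 2 from by field_simp] at this
    linarith
  have huz : u = 0 := le_antisymm hu0 hu'
  have hμnn : ∀ j, 0 ≤ μ j := by
    intro j
    by_contra hcon
    push_neg at hcon
    set R : ℝ := σ / (-μ j) with hR
    have hRpos : 0 < R := div_pos hσpos (by linarith)
    have hmem : (WithLp.toLp 2 (fun i => if i = j then -1 - R else -1) : EuclideanSpace ℝ (Fin p)) ∈ B := by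
      intro i
      by_cases hij : i = j <;> simp [hij] <;> linarith
    have hv := hBu _ hmem
    rw [hμr, huz] at hv
    have hsplit : ∑ i, μ i * (if i = j then -1 - R else -1 : ℝ) = -σ - R * μ j := by
      have hterm : ∀ i ∈ Finset.univ, μ i * (if i = j then -1 - R else -1 : ℝ)
          = -(μ i) + (if i = j then -(R * μ j) else 0) := by
        intro i _
        by_cases hij : i = j
        · subst hij; rw [if_pos rfl, if_pos rfl]; ring
        · rw [if_neg hij, if_neg hij]; ring
      rw [Finset.sum_congr rfl hterm, Finset.sum_add_distrib, Finset.sum_neg_distrib,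
        Finset.sum_ite_eq']
      simp [hσ]
      ring
    simp only [WithLp.ofLp_toLp] at hv
    rw [hsplit] at hv
    have hRμ : R * μ j = -σ := by
      rw [hR, div_neg, neg_mul, div_mul_eq_mul_div, mul_div_assoc, div_self hcon.ne,
        mul_one]
    linarith
  refine ⟨fun i => μ i / σ, fun i => div_nonneg (hμnn i) hσpos.le, ?_, ?_⟩
  · rw [← Finset.sum_div, ← hσ, div_self hσpos.ne']
  · intro x hx
    have hxA : (WithLp.toLp 2 (fun i => f i x - f i xh) : EuclideanSpace ℝ (Fin p)) ∈ A :=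
      ⟨x, hx, fun i => le_refl _⟩
    have := hAu _ hxA
    rw [hμr, huz] at this
    have hexp : ∑ i, μ i * (f i x - f i xh) = ∑ i, μ i * f i x - ∑ i, μ i * f i xh := by
      rw [← Finset.sum_sub_distrib]; congr 1; ext i; ring
    simp only [WithLp.ofLp_toLp] at this
    rw [hexp] at this
    have h2 : ∑ i, μ i / σ * f i xh = (∑ i, μ i * f i xh) / σ := by
      rw [Finset.sum_div]; congr 1; ext i; ring
    have h3 : ∑ i, μ i / σ * f i x = (∑ i, μ i * f i x) / σ := by
      rw [Finset.sum_div]; congr 1; ext i; ring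
    rw [h2, h3, div_le_div_iff_of_pos_right hσpos]
    linarith

private lemma le_of_forall_gt' {A d : ℝ} (h : ∀ t, d < t → A < t) : A ≤ d := by
  by_contra hc
  push_neg at hc
  have := h ((d + A) / 2) (by linarith)
  linarith

lemma sep_epi {n : ℕ} (F : Eucl n → ℝ) (hF : ConvexOn ℝ Set.univ F) (hF0 : F 0 = 0)
    (K : Set (Eucl n × ℝ)) (hK : Convex ℝ K) (hK0 : ((0 : Eucl n), (0 : ℝ)) ∈ K)
    (hdisj : ∀ z t, F z < t → (z, t) ∉ K) :
    ∃ v : Eucl n, (∀ z, ⟪v, z⟫ ≤ F z) ∧ ∀ q ∈ K, q.2 ≤ ⟪v, q.1⟫ := by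
  have hFc : Continuous F := hF.locallyLipschitz.continuous
  set C : Set (Eucl n × ℝ) := {q | F q.1 < q.2} with hC
  have hCopen : IsOpen C := isOpen_lt (hFc.comp continuous_fst) continuous_snd
  have hCconv : Convex ℝ C := by
    intro q hq q' hq' a b ha hb hab
    simp only [hC, Set.mem_setOf_eq] at hq hq' ⊢
    have h1 : F (a • q.1 + b • q'.1) ≤ a * F q.1 + b * F q'.1 := by
      simpa [smul_eq_mul] using hF.2 (Set.mem_univ q.1) (Set.mem_univ q'.1) ha hb hab
    have hfst : (a • q + b • q').1 = a • q.1 + b • q'.1 := rfl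
    have hsnd : (a • q + b • q').2 = a * q.2 + b * q'.2 := rfl
    rw [hfst, hsnd]
    obtain rfl | ha' := ha.eq_or_lt
    · simp only [zero_add] at hab; subst hab; simpa using hq'
    · obtain rfl | hb' := hb.eq_or_lt
      · simp only [add_zero] at hab; subst hab; simpa using hq
      · calc F (a • q.1 + b • q'.1) ≤ a * F q.1 + b * F q'.1 := h1
          _ < a * q.2 + b * q'.2 := by
            have := mul_lt_mul_of_pos_left hq ha'
            have := mul_lt_mul_of_pos_left hq' hb'
            linarith
  have hdisj' : Disjoint C K := Set.disjoint_left.mpr fun q hq hqK => hdisj q.1 q.2 hq hqK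
  obtain ⟨φ, u, hCu, hKu⟩ := geometric_hahn_banach_open hCconv hCopen hK hdisj'
  have h00 : φ ((0:Eucl n), (0:ℝ)) = 0 := map_zero φ
  have hu0 : u ≤ 0 := by have := hKu _ hK0; rwa [h00] at this
  set s : ℝ := φ ((0 : Eucl n), (1 : ℝ)) with hs
  have hphi : ∀ (z : Eucl n) (t : ℝ), φ (z, t) = φ (z, 0) + t * s := by
    intro z t
    have h : (z, t) = (z, (0:ℝ)) + t • ((0:Eucl n), (1:ℝ)) := by
      simp [Prod.ext_iff]
    rw [h, map_add, map_smul, smul_eq_mul, hs]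
  have hCt : ∀ t : ℝ, 0 < t → t * s < u := by
    intro t ht
    have hmem : ((0:Eucl n), t) ∈ C := by simp [hC, hF0, ht]
    have h := hCu _ hmem
    rw [hphi] at h
    simpa [h00] using h
  have hs0 : s < 0 := by
    rcases lt_trichotomy s 0 with h | h | h
    · exact h
    · exfalso; have := hCt 1 one_pos; rw [one_mul, h] at this; linarith
    · exfalso; have := hCt 1 one_pos; rw [one_mul] at this; linarith
  have hu0' : 0 ≤ u := by
    by_contra hcon
    push_neg at hcon
    have := hCt (u / s) (div_pos_of_neg_of_neg hcon hs0)
    rw [div_mul_cancel₀ _ hs0.ne] at this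
    exact lt_irrefl _ this
  have hu : u = 0 := le_antisymm hu0 hu0'
  have hspos : (0:ℝ) < -s := neg_pos.2 hs0
  set ψ := φ.comp (ContinuousLinearMap.inl ℝ (Eucl n) ℝ) with hψ
  set v₀ := (InnerProductSpace.toDual ℝ (Eucl n)).symm ψ with hv₀
  have hv₀app : ∀ z : Eucl n, ⟪v₀, z⟫ = φ (z, 0) := by
    intro z
    rw [hv₀, InnerProductSpace.toDual_symm_apply]
    simp [hψ]
  refine ⟨(-s)⁻¹ • v₀, ?_, ?_⟩
  · intro z
    apply le_of_forall_gt'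
    intro t ht
    have hmem : (z, t) ∈ C := ht
    have h1 := hCu _ hmem
    rw [hphi, hu] at h1
    rw [real_inner_smul_left, hv₀app, inv_mul_eq_div, div_lt_iff₀ hspos]
    linarith
  · intro q hq
    have h1 := hKu _ hq
    have hq' : φ q = φ (q.1, 0) + q.2 * s := by rw [← hphi]
    rw [hq', hu] at h1
    rw [real_inner_smul_left, hv₀app, inv_mul_eq_div, le_div_iff₀ hspos]
    linarith

lemma convexOn_shift {n : ℕ} (f : Eucl n → ℝ) (hf : ConvexOn ℝ Set.univ f)
    (x w : Eucl n) (c : ℝ) :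
    ConvexOn ℝ Set.univ (fun z => f (x + z) - ⟪w, z⟫ - c) := by
  refine ⟨convex_univ, fun z _ z' _ a b ha hb hab => ?_⟩
  have hxx : a • x + b • x = x := by rw [← add_smul, hab, one_smul]
  have hx : x + (a • z + b • z') = a • (x + z) + b • (x + z') := by
    rw [smul_add, smul_add,
      show a • x + a • z + (b • x + b • z') = a • x + b • x + (a • z + b • z') from by abel,
      hxx]
  have h1 := hf.2 (Set.mem_univ (x + z)) (Set.mem_univ (x + z')) ha hb hab
  simp only [smul_eq_mul] at h1
  have h2 : ⟪w, a • z + b • z'⟫ = a * ⟪w, z⟫ + b * ⟪w, z'⟫ := by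
    rw [inner_add_right, real_inner_smul_right, real_inner_smul_right]
  have h3 : a * c + b * c = c := by rw [← add_mul, hab, one_mul]
  simp only [smul_eq_mul]
  rw [hx, h2]
  nlinarith [h1, h3]

lemma subdiff_nonempty {n : ℕ} (f : Eucl n → ℝ) (hf : ConvexOn ℝ Set.univ f)
    (x : Eucl n) : (subdiff f x).Nonempty := by
  obtain ⟨v, hv, -⟩ := sep_epi (fun z => f (x + z) - ⟪(0:Eucl n), z⟫ - f x)
    (convexOn_shift f hf x 0 (f x)) (by simp)
    {((0 : Eucl n), (0:ℝ))} (convex_singleton _) rfl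
    (by
      intro z t h hm
      rw [Set.mem_singleton_iff, Prod.mk.injEq] at hm
      obtain ⟨rfl, rfl⟩ := hm
      simp at h)
  refine ⟨v, fun y => ?_⟩
  have := hv (y - x)
  simp only [inner_zero_left, sub_zero] at this
  rw [add_sub_cancel] at this
  linarith

lemma subdiff_pair {n : ℕ} (f g : Eucl n → ℝ) (hf : ConvexOn ℝ Set.univ f)
    (hg : ConvexOn ℝ Set.univ g) (x w : Eucl n)
    (hw : ∀ y, f x + g x + ⟪w, y - x⟫ ≤ f y + g y) :
    ∃ ξ ∈ subdiff f x, w - ξ ∈ subdiff g x := by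
  obtain ⟨v, hv1, hv2⟩ := sep_epi (fun z => f (x + z) - ⟪w, z⟫ - f x)
    (convexOn_shift f hf x w (f x)) (by simp)
    {q : Eucl n × ℝ | q.2 ≤ g x - g (x + q.1)}
    (by
      intro q hq q' hq' a b ha hb hab
      simp only [Set.mem_setOf_eq] at hq hq' ⊢
      have hfst : (a • q + b • q').1 = a • q.1 + b • q'.1 := rfl
      have hsnd : (a • q + b • q').2 = a * q.2 + b * q'.2 := rfl
      rw [hfst, hsnd]
      have hxx : a • x + b • x = x := by rw [← add_smul, hab, one_smul]
      have hx : x + (a • q.1 + b • q'.1) = a • (x + q.1) + b • (x + q'.1) := by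
        rw [smul_add, smul_add,
          show a • x + a • q.1 + (b • x + b • q'.1) = a • x + b • x + (a • q.1 + b • q'.1)
            from by abel,
          hxx]
      have h1 := hg.2 (Set.mem_univ (x + q.1)) (Set.mem_univ (x + q'.1)) ha hb hab
      simp only [smul_eq_mul] at h1
      rw [hx]
      have h3 : a * g x + b * g x = g x := by rw [← add_mul, hab, one_mul]
      nlinarith [mul_le_mul_of_nonneg_left hq ha, mul_le_mul_of_nonneg_left hq' hb])
    (by simp)
    (by
      intro z t h1 h2
      simp only [Set.mem_setOf_eq] at h1 h2
      have := hw (x + z)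
      rw [add_sub_cancel_left] at this
      linarith)
  refine ⟨w + v, fun y => ?_, fun y => ?_⟩
  · have := hv1 (y - x)
    rw [add_sub_cancel] at this
    rw [inner_add_left]
    linarith
  · have := hv2 (y - x, g x - g (x + (y - x))) (by simp)
    simp only [add_sub_cancel] at this
    have hww : w - (w + v) = -v := by abel
    rw [hww, inner_neg_left]
    linarith

lemma convexOn_finset_sum {n : ℕ} {ι : Type*} (s : Finset ι) (h : ι → Eucl n → ℝ)
    (hh : ∀ i ∈ s, ConvexOn ℝ Set.univ (h i)) :
    ConvexOn ℝ Set.univ (fun y => ∑ i ∈ s, h i y) := by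
  classical
  induction s using Finset.cons_induction with
  | empty => simpa using convexOn_const (0:ℝ) convex_univ
  | cons b t hb ih =>
    simp only [Finset.sum_cons]
    exact (hh b (Finset.mem_cons_self b t)).add
      (ih fun i hi => hh i (Finset.mem_cons_of_mem hi))

lemma subdiff_sum {n : ℕ} {ι : Type*} [DecidableEq ι] (s : Finset ι) (h : ι → Eucl n → ℝ)
    (hh : ∀ i ∈ s, ConvexOn ℝ Set.univ (h i)) (x w : Eucl n)
    (hw : ∀ y, (∑ i ∈ s, h i x) + ⟪w, y - x⟫ ≤ ∑ i ∈ s, h i y) :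
    ∃ ξ : ι → Eucl n, (∀ i ∈ s, ξ i ∈ subdiff (h i) x) ∧ ∑ i ∈ s, ξ i = w := by
  induction s using Finset.cons_induction generalizing w with
  | empty =>
    refine ⟨fun _ => 0, by simp, ?_⟩
    have hw0 : ⟪w, w⟫ ≤ 0 := by
      have := hw (x + w)
      simp only [Finset.sum_empty, add_sub_cancel_left] at this
      linarith
    simpa using (real_inner_self_nonpos.mp hw0).symm
  | cons a s ha ih =>
    have hconv : ConvexOn ℝ Set.univ (fun y => ∑ i ∈ s, h i y) :=
      convexOn_finset_sum s h fun i hi => hh i (Finset.mem_cons_of_mem hi)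
    obtain ⟨ξa, hξa, hrest⟩ := subdiff_pair (h a) (fun y => ∑ i ∈ s, h i y)
      (hh a (Finset.mem_cons_self a s)) hconv x w
      (fun y => by
        have := hw y
        simp only [Finset.sum_cons] at this
        linarith)
    obtain ⟨ξ, hξ, hsum⟩ := ih (fun i hi => hh i (Finset.mem_cons_of_mem hi)) (w - ξa) hrest
    refine ⟨Function.update ξ a ξa, ?_, ?_⟩
    · intro i hi
      rcases Finset.mem_cons.mp hi with rfl | hi'
      · simpa [Function.update_self] using hξa
      · have hne : i ≠ a := by rintro rfl; exact ha hi'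
        simpa [Function.update_of_ne hne] using hξ i hi'
    · have hupd : ∀ i ∈ s, Function.update ξ a ξa i = ξ i := fun i hi =>
        Function.update_of_ne (by rintro rfl; exact ha hi) _ _
      rw [Finset.sum_cons, Function.update_self, Finset.sum_congr rfl hupd, hsum]
      abel

end Aux

variable {n p : ℕ} {T : Type*}

/-- If `x̂ ∈ S` is a weak efficient solution of `(P)` and LFMCQ holds at `x̂`,
then there exist `ξ` with `ξ_i ∈ ∂f_i(x̂)` and `λ` in the unit simplex with `ϑ(x̂, ξ, λ) = 0`. -/
theorem stmt6
    (hn : 1 ≤ n) (hp : 1 ≤ p)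
    (f : Fin p → Eucl n → ℝ) (g : T → Eucl n → EReal)
    (hf : ∀ i, ConvexOn ℝ Set.univ (f i))
    (hgconv : ∀ t, ConvexE (g t))
    (hgproper : ∀ t, ProperE (g t))
    (hglsc : ∀ t, LowerSemicontinuous (g t))
    (xh : Eucl n) (hxS : xh ∈ feasSet g)
    (hweak : WeakEff f (feasSet g) xh)
    (hlfm : LFMCQ g xh) :
    ∃ (ξ : Fin p → Eucl n) (lam : Fin p → ℝ),
      (∀ i, ξ i ∈ subdiff (f i) xh) ∧ simplex lam ∧
      gapFn (feasSet g) xh ξ lam = 0 := by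
  classical
  have hSconv : Convex ℝ (feasSet g) := by
    intro x hx y hy a b ha hb hab
    intro t
    refine (hgconv t x y a b ha hb hab).trans ?_
    have h1 : (a : EReal) * g t x ≤ 0 := ereal_mul_nonpos ha (hx t)
    have h2 : (b : EReal) * g t y ≤ 0 := ereal_mul_nonpos hb (hy t)
    calc (a : EReal) * g t x + (b : EReal) * g t y ≤ 0 + 0 := add_le_add h1 h2
      _ = 0 := by simp
  obtain ⟨lam, hlam0, hlam1, hmin⟩ := scalarize f hf (feasSet g) hSconv xh hxS hweak
  set F : Eucl n → ℝ := fun z => ∑ i, lam i * (f i (xh + z) - f i xh) with hFdef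
  have hFconv : ConvexOn ℝ Set.univ F :=
    convexOn_finset_sum Finset.univ (fun i z => lam i * (f i (xh + z) - f i xh))
      (fun i _ => by
        have h := convexOn_shift (f i) (hf i) xh 0 (f i xh)
        simp only [inner_zero_left, sub_zero] at h
        simpa [smul_eq_mul] using h.smul (hlam0 i))
  have hF0 : F 0 = 0 := by simp [hFdef]
  set K : Set (Eucl n × ℝ) := {q | xh + q.1 ∈ feasSet g ∧ q.2 ≤ 0} with hKdef
  have hKconv : Convex ℝ K := by
    rintro q ⟨hq1, hq2⟩ q' ⟨hq1', hq2'⟩ a b ha hb hab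
    have hxx : a • xh + b • xh = xh := by rw [← add_smul, hab, one_smul]
    constructor
    · have hfe : xh + (a • q + b • q').1 = a • (xh + q.1) + b • (xh + q'.1) := by
        show xh + (a • q.1 + b • q'.1) = _
        rw [smul_add, smul_add,
          show a • xh + a • q.1 + (b • xh + b • q'.1)
              = a • xh + b • xh + (a • q.1 + b • q'.1) from by abel,
          hxx]
      show xh + (a • q + b • q').1 ∈ feasSet g
      rw [hfe]
      exact hSconv hq1 hq1' ha hb hab
    · show a * q.2 + b * q'.2 ≤ 0
      nlinarith [hq2, hq2', ha, hb]
  have hK0 : ((0 : Eucl n), (0 : ℝ)) ∈ K := by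
    constructor
    · simpa using hxS
    · exact le_refl 0
  have hdisj : ∀ z t, F z < t → (z, t) ∉ K := by
    rintro z t hFz ⟨hz1, hz2⟩
    have h1 := hmin (xh + z) hz1
    have h2 : F z = (∑ i, lam i * f i (xh + z)) - ∑ i, lam i * f i xh := by
      simp only [hFdef, mul_sub]
      rw [Finset.sum_sub_distrib]
    rw [h2] at hFz
    linarith
  obtain ⟨w, hw1, hw2⟩ := sep_epi F hFconv hF0 K hKconv hK0 hdisj
  have hwS : ∀ y ∈ feasSet g, (0 : ℝ) ≤ ⟪w, y - xh⟫ := by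
    intro y hy
    have := hw2 (y - xh, 0) ⟨by simpa [add_sub_cancel] using hy, le_refl 0⟩
    simpa using this
  obtain ⟨ξ', hξ'mem, hξ'sum⟩ := subdiff_sum Finset.univ (fun i y => lam i * f i y)
    (fun i _ => by simpa [smul_eq_mul] using (hf i).smul (hlam0 i)) xh w
    (fun y => by
      have h := hw1 (y - xh)
      have hFy : F (y - xh) = (∑ i, lam i * f i y) - ∑ i, lam i * f i xh := by
        simp only [hFdef, add_sub_cancel, mul_sub]
        rw [Finset.sum_sub_distrib]
      rw [hFy] at h
      linarith)
  set ξ : Fin p → Eucl n := fun i =>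
    if h : lam i = 0 then (subdiff_nonempty (f i) (hf i) xh).choose
    else (lam i)⁻¹ • ξ' i with hξdef
  have hmem : ∀ i, ξ i ∈ subdiff (f i) xh := by
    intro i
    rw [hξdef]
    by_cases h : lam i = 0
    · simp only [dif_pos h]
      exact (subdiff_nonempty (f i) (hf i) xh).choose_spec
    · simp only [dif_neg h]
      have hpos : 0 < lam i := (hlam0 i).lt_of_ne (Ne.symm h)
      intro y
      have hy := hξ'mem i (Finset.mem_univ i) y
      simp only at hy
      rw [real_inner_smul_left]
      have h2 : (lam i)⁻¹ * ⟪ξ' i, y - xh⟫ ≤ f i y - f i xh := by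
        rw [inv_mul_eq_div, div_le_iff₀ hpos]
        nlinarith [hy]
      linarith
  have hkey : ∀ i ∈ Finset.univ, lam i • ξ i = ξ' i := by
    intro i _
    rw [hξdef]
    by_cases h : lam i = 0
    · simp only [dif_pos h, h, zero_smul]
      have h0 : ξ' i = 0 := by
        have hy := hξ'mem i (Finset.mem_univ i) (xh + ξ' i)
        simp only [h, zero_mul, add_sub_cancel_left, zero_add] at hy
        exact real_inner_self_nonpos.mp hy
      rw [h0]
    · simp only [dif_neg h, smul_smul, mul_inv_cancel₀ h, one_smul]
  have hwsum : ∑ i, lam i • ξ i = w := by rw [Finset.sum_congr rfl hkey, hξ'sum]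
  refine ⟨ξ, lam, hmem, ⟨hlam0, hlam1⟩, ?_⟩
  have hval : ∀ y : Eucl n, ∑ i, lam i * ⟪ξ i, xh - y⟫ = ⟪w, xh - y⟫ := by
    intro y
    rw [← hwsum, sum_inner]
    exact (Finset.sum_congr rfl fun i _ => real_inner_smul_left _ _ _).symm
  unfold gapFn
  apply le_antisymm
  · refine iSup₂_le fun y hy => ?_
    rw [hval y]
    have h1 : ⟪w, xh - y⟫ ≤ 0 := by
      have := hwS y hy
      rw [show xh - y = -(y - xh) from by abel, inner_neg_right]
      linarith
    exact EReal.coe_nonpos.mpr h1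
  · refine le_iSup₂_of_le xh hxS ?_
    have hz : (∑ i, lam i * ⟪ξ i, xh - xh⟫ : ℝ) = 0 := by
      simp
    rw [hz]
    simp


end MOSIP
end
end
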